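/- Let A be a real m×n matrix with columns F₁,…,Fₙ, let A⁺ be a Moore–Penrose pseudoinverse of A, and set S = Iₙ − A⁺·A. Then for every index j, the following are equivalent: (1) F_j does not lie in the linear span of the other columns {F_i : i ≠ j}; (2) every x ∈ ℝⁿ with A·x = 0 satisfies x_j = 0; (3) the j-th row of S is zero, i.e., e_jᵀ·S = 0; (4) the diagonal entry S_{j,j} equals 0. -/

import Mathlib

open Matrix

/-- For a column `F_j` of `A`, the following are equivalent:
(1) `F_j` is not in the span of the other columns;
(2) every null vector of `A` has `j`-th entry zero;
(3) the `j`-th row of `S = I - A⁺A` is zero;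
(4) `S j j = 0`. -/
theorem column_independent_iff_signature_row_zero
    {m n : ℕ} (A : Matrix (Fin m) (Fin n) ℝ) (Ap : Matrix (Fin n) (Fin m) ℝ)
    (h1 : A * Ap * A = A) (h2 : Ap * A * Ap = Ap)
    (h3 : (A * Ap)ᵀ = A * Ap) (h4 : (Ap * A)ᵀ = Ap * A)
    (S : Matrix (Fin n) (Fin n) ℝ) (hS : S = 1 - Ap * A) (j : Fin n) :
    [ Aᵀ j ∉ Submodule.span ℝ (Aᵀ '' {i | i ≠ j}),
      ∀ x : Fin n → ℝ, A.mulVec x = 0 → x j = 0,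
      ∀ k : Fin n, S j k = 0,
      S j j = 0 ].TFAE := by
  have hAS : A * S = 0 := by
    rw [hS, Matrix.mul_sub, Matrix.mul_one, ← Matrix.mul_assoc, h1, sub_self]
  have hsym : ∀ a b, S a b = S b a := by
    intro a b
    have : Sᵀ = S := by rw [hS, transpose_sub, transpose_one, h4]
    conv_lhs => rw [← this]
    rfl
  have hBB : Ap * A * (Ap * A) = Ap * A := by
    rw [← Matrix.mul_assoc, Matrix.mul_assoc Ap A Ap, Matrix.mul_assoc, h1]
  have hSS : S * S = S := by
    rw [hS]
    simp only [Matrix.mul_sub, Matrix.sub_mul, Matrix.one_mul, Matrix.mul_one, hBB]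
    abel
  have key : Aᵀ j ∈ Submodule.span ℝ (Aᵀ '' {i | i ≠ j}) ↔
      ∃ x : Fin n → ℝ, A.mulVec x = 0 ∧ x j ≠ 0 := by
    rw [show Aᵀ '' {i | i ≠ j} = Set.range (fun i : {i : Fin n | i ≠ j} => Aᵀ i.1) from
      Set.image_eq_range _ _, Submodule.mem_span_range_iff_exists_fun]
    constructor
    · rintro ⟨c, hc⟩
      refine ⟨fun i => if h : i = j then (-1 : ℝ) else c ⟨i, h⟩, ?_, by simp⟩
      funext k
      have hck := congrFun hc k
      simp only [Finset.sum_apply, Pi.smul_apply, transpose_apply, smul_eq_mul] at hck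
      simp only [mulVec, dotProduct, Pi.zero_apply]
      rw [← Finset.sum_erase_add _ _ (Finset.mem_univ j)]
      have hsub : ∑ i ∈ Finset.univ.erase j,
          A k i * (if h : i = j then (-1 : ℝ) else c ⟨i, h⟩)
          = ∑ i : ↑{i : Fin n | i ≠ j}, c i * A k i.1 := by
        rw [Finset.sum_subtype (p := fun i => i ∈ {i : Fin n | i ≠ j})
          (Finset.univ.erase j) (fun i => by simp [Finset.mem_erase])]
        refine Finset.sum_congr rfl (fun i _ => ?_)
        rw [dif_neg i.2]; ring
      rw [hsub, hck]
      simp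
    · rintro ⟨x, hx, hxj⟩
      refine ⟨fun i => -(x i.1) / x j, ?_⟩
      funext k
      have hk := congrFun hx k
      simp only [mulVec, dotProduct, Pi.zero_apply] at hk
      rw [← Finset.sum_erase_add _ _ (Finset.mem_univ j)] at hk
      have he : ∑ i ∈ Finset.univ.erase j, A k i * x i = -(A k j * x j) := by
        linarith
      simp only [Finset.sum_apply, Pi.smul_apply, transpose_apply, smul_eq_mul]
      rw [← Finset.sum_subtype (p := fun i => i ∈ {i : Fin n | i ≠ j})
          (Finset.univ.erase j) (fun i => by simp [Finset.mem_erase])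
          (fun i => -(x i) / x j * A k i)]
      have hmul : ∑ i ∈ Finset.univ.erase j, -(x i) / x j * A k i
          = (-1 / x j) * ∑ i ∈ Finset.univ.erase j, A k i * x i := by
        rw [Finset.mul_sum]
        exact Finset.sum_congr rfl (fun i _ => by ring)
      rw [hmul, he]
      field_simp
  tfae_have 1 ↔ 2 := by
    constructor
    · intro hni x hx
      by_contra hxj
      exact hni (key.mpr ⟨x, hx, hxj⟩)
    · intro h2' hmem
      obtain ⟨x, hx, hxj⟩ := key.mp hmem
      exact hxj (h2' x hx)
  tfae_have 2 → 3 := by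
    intro h2' k
    refine h2' (fun i => S i k) ?_
    funext l
    have := congrFun (congrFun hAS l) k
    simpa [mulVec, dotProduct, Matrix.mul_apply] using this
  tfae_have 3 → 4 := fun h => h j
  tfae_have 4 → 3 := by
    intro h4' k
    have hd : S j j = ∑ l, S j l * S j l := by
      conv_lhs => rw [← hSS]
      rw [Matrix.mul_apply]
      exact Finset.sum_congr rfl (fun l _ => by rw [hsym l j])
    have hz : ∑ l, S j l * S j l = 0 := by rw [← hd, h4']
    have := (Finset.sum_eq_zero_iff_of_nonneg
      (fun l _ => mul_self_nonneg (S j l))).mp hz k (Finset.mem_univ k)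
    exact mul_self_eq_zero.mp this
  tfae_have 3 → 2 := by
    intro h3' x hx
    have hfix : S.mulVec x = x := by
      rw [hS, sub_mulVec, one_mulVec, ← mulVec_mulVec, hx, mulVec_zero, sub_zero]
    have := congrFun hfix j
    rw [← this]
    simp only [mulVec, dotProduct]
    exact Finset.sum_eq_zero (fun k _ => by rw [h3' k, zero_mul])
  tfae_finish
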